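/- Let W be a Weyl group of rank n with Coxeter number h and N = nh/2 positive roots. Suppose L is a graded vector space whose graded character at w ∈ W is ch_L(w,t) = t^{-N} det(1 - t^{h+1} w)/det(1 - t w) (an element of C[t,t^{-1}] for each w). Then the Hilbert series of L (character at w = 1) is t^{-N}(1+t+...+t^h)^n, its dimension is (h+1)^n, and ch_L(w,1) = (h+1)^{dim ker(1-w)} when ord(w) is coprime to h+1. -/

import Mathlib

open Module Matrix Finset Filter

lemma myEvalCharpoly {n : ℕ} (A : Matrix (Fin n) (Fin n) ℂ) (x : ℂ) :
    A.charpoly.eval x = (x • (1 : Matrix (Fin n) (Fin n) ℂ) - A).det := by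
  rw [Matrix.charpoly, ← Polynomial.coe_evalRingHom, RingHom.map_det]
  congr 1
  ext i j
  rcases eq_or_ne i j with rfl | hij
  · simp [Matrix.charmatrix_apply_eq, Matrix.one_apply]
  · simp [Matrix.charmatrix_apply_ne _ _ _ hij, Matrix.one_apply, hij]

lemma myKerStep {n : ℕ} (w : Matrix (Fin n) (Fin n) ℂ) (m : ℕ) (hm : 0 < m) (hw : w ^ m = 1)
    (v : Fin n → ℂ) (h2 : ((1 - w) * (1 - w)).mulVec v = 0) : (1 - w).mulVec v = 0 := by
  set u := (1 - w).mulVec v with hu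
  have h2' : (1 - w).mulVec u = 0 := by
    rw [hu, Matrix.mulVec_mulVec]; exact h2
  have hwu : w.mulVec u = u := by
    rw [Matrix.sub_mulVec, Matrix.one_mulVec, sub_eq_zero] at h2'
    exact h2'.symm
  have hpow : ∀ j : ℕ, (w ^ j).mulVec u = u := by
    intro j
    induction j with
    | zero => simp
    | succ j ih => rw [pow_succ, ← Matrix.mulVec_mulVec, hwu, ih]
  have hsum : ((∑ j ∈ Finset.range m, w ^ j) * (1 - w)) = 0 := by
    rw [← neg_sub w 1, mul_neg, geom_sum_mul, hw, sub_self, neg_zero]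
  have h3 : ((∑ j ∈ Finset.range m, w ^ j)).mulVec u = 0 := by
    rw [hu, Matrix.mulVec_mulVec, hsum, Matrix.zero_mulVec]
  rw [← Matrix.toLin'_apply, map_sum, LinearMap.sum_apply] at h3
  simp only [Matrix.toLin'_apply, hpow, Finset.sum_const, Finset.card_range] at h3
  rw [← Nat.cast_smul_eq_nsmul ℂ] at h3
  exact (smul_eq_zero.mp h3).resolve_left (Nat.cast_ne_zero.mpr hm.ne')

lemma myFinrank {n : ℕ} (w : Matrix (Fin n) (Fin n) ℂ) (m : ℕ) (hm : 0 < m) (hw : w ^ m = 1) :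
    finrank ℂ (LinearMap.ker (Matrix.toLin' ((1 : Matrix (Fin n) (Fin n) ℂ) - w)))
      = ((1 : Matrix (Fin n) (Fin n) ℂ) - w).charpoly.natTrailingDegree := by
  set A := (1 : Matrix (Fin n) (Fin n) ℂ) - w with hA
  set φ : Module.End ℂ (Fin n → ℂ) := Matrix.toLin' A with hφ
  have hkerpow : ∀ j : ℕ, LinearMap.ker (φ ^ j) ≤ LinearMap.ker φ := by
    intro j
    induction j with
    | zero => rw [pow_zero, Module.End.one_eq_id, LinearMap.ker_id]; exact bot_le
    | succ j ih =>
      intro v hv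
      rw [LinearMap.mem_ker, pow_succ, Module.End.mul_apply] at hv
      have h1 : φ v ∈ LinearMap.ker φ := ih (by simpa [LinearMap.mem_ker] using hv)
      rw [LinearMap.mem_ker] at h1 ⊢
      rw [hφ, Matrix.toLin'_apply] at h1 ⊢
      rw [Matrix.toLin'_apply, Matrix.mulVec_mulVec] at h1
      exact myKerStep w m hm hw v h1
  have hmax : φ.maxGenEigenspace 0 = LinearMap.ker φ := by
    apply le_antisymm
    · intro v hv
      rw [Module.End.mem_maxGenEigenspace] at hv
      obtain ⟨k, hk⟩ := hv
      simp only [zero_smul, sub_zero] at hk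
      exact hkerpow k (by simpa [LinearMap.mem_ker] using hk)
    · intro v hv
      rw [Module.End.mem_maxGenEigenspace]
      exact ⟨1, by simpa [pow_one] using hv⟩
  have hchar : φ.charpoly = A.charpoly := by
    conv_rhs => rw [← LinearMap.toMatrix'_toLin' A]
    rw [← LinearMap.toMatrix_eq_toMatrix', LinearMap.charpoly_toMatrix]
  rw [← hchar, ← LinearMap.finrank_maxGenEigenspace_zero_eq, hmax]

lemma myFieldId (h n k : ℕ) (hkn : k ≤ n) (t a b x G : ℂ) (ht0 : t ≠ 0) (hb : b ≠ 0)
    (hx0 : x ≠ 0) :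
    ((-t ^ (h+1)) ^ n * ((x * G / t ^ h) ^ k * a)) / ((-t) ^ n * (x ^ k * b))
      = t ^ (h * (n - k)) * G ^ k * (a / b) := by
  obtain ⟨d, rfl⟩ : ∃ d, n = d + k := ⟨n - k, (Nat.sub_add_cancel hkn).symm⟩
  have hd : (d + k) - k = d := by omega
  rw [hd]
  have hB : ((-t) ^ (d+k) * (x ^ k * b)) ≠ 0 :=
    mul_ne_zero (pow_ne_zero _ (neg_ne_zero.mpr ht0)) (mul_ne_zero (pow_ne_zero _ hx0) hb)
  rw [div_eq_iff hB]
  have hxk : (x * G / t ^ h) ^ k = x ^ k * G ^ k / t ^ (h * k) := by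
    rw [div_pow, mul_pow, pow_mul]
  rw [hxk]
  field_simp
  ring

set_option maxHeartbeats 2000000

set_option synthInstance.maxHeartbeats 1000000 in
/-- Properties of a graded vector space `L` whose graded character at `w` is
`t^{-N} det(1-t^{h+1}w)/det(1-tw)`: its Hilbert series (the character at `w = 1`)
is `t^{-N}(1+t+⋯+t^h)^n`, its dimension is `(h+1)^n`, and its character value at
any `w` of order coprime to `h+1` is `(h+1)^{dim ker(1-w)}`. -/
theorem graded_character_properties (n h N : ℕ) (hn : 0 < n) (hh : 0 < h)
    (hN : 2 * N = n * h) :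
    ((RatFunc.X : RatFunc ℂ) ^ (-(N : ℤ)) *
        (Matrix.det ((1 : Matrix (Fin n) (Fin n) (RatFunc ℂ)) -
            ((RatFunc.X : RatFunc ℂ) ^ (h + 1)) • (1 : Matrix (Fin n) (Fin n) (RatFunc ℂ))) /
          Matrix.det ((1 : Matrix (Fin n) (Fin n) (RatFunc ℂ)) -
            (RatFunc.X : RatFunc ℂ) • (1 : Matrix (Fin n) (Fin n) (RatFunc ℂ))))
      = (RatFunc.X : RatFunc ℂ) ^ (-(N : ℤ)) *
          (∑ k ∈ Finset.range (h + 1), (RatFunc.X : RatFunc ℂ) ^ k) ^ n) ∧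
    (((∑ k ∈ Finset.range (h + 1), (Polynomial.X : Polynomial ℂ) ^ k) ^ n).eval 1
      = ((h : ℂ) + 1) ^ n) ∧
    ∀ (w : Matrix (Fin n) (Fin n) ℂ) (m : ℕ), 0 < m → w ^ m = 1 → Nat.Coprime m (h + 1) →
      Filter.Tendsto
        (fun t : ℂ => Matrix.det ((1 : Matrix (Fin n) (Fin n) ℂ) - t ^ (h + 1) • w) /
          Matrix.det ((1 : Matrix (Fin n) (Fin n) ℂ) - t • w))
        (nhdsWithin 1 {(1 : ℂ)}ᶜ)
        (nhds (((h : ℂ) + 1) ^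
          (finrank ℂ (LinearMap.ker (Matrix.toLin' ((1 : Matrix (Fin n) (Fin n) ℂ) - w)))))) := by
  refine ⟨?_, ?_, ?_⟩
  · -- Part 1
    congr 1
    have hsm : ∀ b : RatFunc ℂ, (1 : Matrix (Fin n) (Fin n) (RatFunc ℂ)) - b • 1 = (1 - b) • 1 :=
      fun b => by rw [sub_smul, one_smul]
    have hdet : ∀ b : RatFunc ℂ,
        Matrix.det ((1 : Matrix (Fin n) (Fin n) (RatFunc ℂ)) - b • 1) = (1 - b) ^ n := by
      intro b
      rw [hsm, Matrix.det_smul, Matrix.det_one, mul_one, Fintype.card_fin]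
    rw [hdet, hdet]
    have hne : (1 : Polynomial ℂ) - Polynomial.X ≠ 0 := by
      intro h0
      have := congrArg (fun p : Polynomial ℂ => p.coeff 1) h0
      simp [Polynomial.coeff_one] at this
    have hne' : (1 - RatFunc.X : RatFunc ℂ) ≠ 0 := by
      have : (1 - RatFunc.X : RatFunc ℂ)
          = algebraMap (Polynomial ℂ) (RatFunc ℂ) (1 - Polynomial.X) := by
        rw [map_sub, _root_.map_one, RatFunc.algebraMap_X]
      rw [this]
      exact RatFunc.algebraMap_ne_zero hne
    have hgeom : (∑ k ∈ Finset.range (h + 1), (RatFunc.X : RatFunc ℂ) ^ k) * (1 - RatFunc.X)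
        = 1 - RatFunc.X ^ (h + 1) := by
      have := geom_sum_mul (RatFunc.X : RatFunc ℂ) (h + 1)
      calc (∑ k ∈ Finset.range (h + 1), (RatFunc.X : RatFunc ℂ) ^ k) * (1 - RatFunc.X)
          = -((∑ k ∈ Finset.range (h + 1), (RatFunc.X : RatFunc ℂ) ^ k) * (RatFunc.X - 1)) := by
            ring
        _ = 1 - RatFunc.X ^ (h + 1) := by rw [this]; ring
    rw [← hgeom, mul_pow, mul_div_cancel_right₀ _ (pow_ne_zero n hne')]
  · -- Part 2
    rw [Polynomial.eval_pow, Polynomial.eval_finset_sum]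
    simp only [Polynomial.eval_pow, Polynomial.eval_X, one_pow, Finset.sum_const,
      Finset.card_range, nsmul_eq_mul, mul_one]
    push_cast
    ring
  · -- Part 3
    intro w m hm hw _
    rw [myFinrank w m hm hw]
    set c := ((1 : Matrix (Fin n) (Fin n) ℂ) - w).charpoly with hc
    set k := c.natTrailingDegree with hk
    have hc0 : c ≠ 0 := (Matrix.charpoly_monic _).ne_zero
    have hkroot : c.rootMultiplicity 0 = k := Polynomial.rootMultiplicity_eq_natTrailingDegree'
    obtain ⟨q, hfac, hq0⟩ : ∃ q : Polynomial ℂ, Polynomial.X ^ k * q = c ∧ q.eval 0 ≠ 0 := by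
      refine ⟨c /ₘ Polynomial.X ^ k, ?_, ?_⟩
      · have hfac := Polynomial.pow_mul_divByMonic_rootMultiplicity_eq c 0
        rwa [map_zero, sub_zero, hkroot] at hfac
      · have h5 := Polynomial.eval_divByMonic_pow_rootMultiplicity_ne_zero 0 hc0
        rwa [map_zero, sub_zero, hkroot] at h5
    have hceval : ∀ x : ℂ, c.eval x = x ^ k * q.eval x := by
      intro x
      conv_lhs => rw [← hfac]
      rw [Polynomial.eval_mul, Polynomial.eval_pow, Polynomial.eval_X]
    have hkn : k ≤ n := by
      have h1 : c.natDegree = n := by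
        rw [hc, Matrix.charpoly_natDegree_eq_dim, Fintype.card_fin]
      exact (Polynomial.natTrailingDegree_le_natDegree c).trans_eq h1
    have hdet : ∀ s : ℂ, s ≠ 0 →
        Matrix.det ((1 : Matrix (Fin n) (Fin n) ℂ) - s • w)
          = (-s) ^ n * (((s - 1)/s) ^ k * q.eval ((s - 1)/s)) := by
      intro s hs
      have h2 : (-s) * ((s - 1)/s) = 1 - s := by field_simp; ring
      have hmat : (1 : Matrix (Fin n) (Fin n) ℂ) - s • w
          = (-s) • (((s - 1)/s) • (1 : Matrix (Fin n) (Fin n) ℂ)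
              - ((1 : Matrix (Fin n) (Fin n) ℂ) - w)) := by
        rw [smul_sub, smul_smul, h2]
        module
      rw [hmat, Matrix.det_smul, Fintype.card_fin]
      congr 1
      rw [← myEvalCharpoly]
      exact hceval _
    set g : ℂ → ℂ := fun t => t ^ (h * (n - k)) * (∑ j ∈ Finset.range (h+1), t ^ j) ^ k *
        (q.eval ((t ^ (h+1) - 1)/t ^ (h+1)) / q.eval ((t - 1)/t)) with hgdef
    have hne0 : ∀ᶠ t : ℂ in nhdsWithin 1 {(1:ℂ)}ᶜ, t ≠ 0 :=
      (eventually_ne_nhds (by norm_num : (1:ℂ) ≠ 0)).filter_mono nhdsWithin_le_nhds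
    have heq : (fun t : ℂ => Matrix.det ((1 : Matrix (Fin n) (Fin n) ℂ) - t ^ (h + 1) • w) /
          Matrix.det ((1 : Matrix (Fin n) (Fin n) ℂ) - t • w)) =ᶠ[nhdsWithin 1 {(1:ℂ)}ᶜ] g := by
      filter_upwards [hne0, self_mem_nhdsWithin] with t ht0 ht1
      replace ht1 : t ≠ 1 := ht1
      have htp : t ^ (h+1) ≠ 0 := pow_ne_zero _ ht0
      simp only [hgdef]
      rw [hdet t ht0, hdet (t ^ (h+1)) htp]
      have hgeom : t ^ (h+1) - 1 = (t - 1) * ∑ j ∈ Finset.range (h+1), t ^ j := by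
        rw [← geom_sum_mul, mul_comm]
      have hx0 : (t - 1)/t ≠ 0 := div_ne_zero (sub_ne_zero.mpr ht1) ht0
      have hx' : (t ^ (h+1) - 1)/t ^ (h+1)
          = ((t - 1)/t) * (∑ j ∈ Finset.range (h+1), t ^ j) / t ^ h := by
        rw [hgeom, pow_succ, div_mul_eq_mul_div, div_div, mul_comm (t ^ h) t]
      rw [hx']
      rcases eq_or_ne (q.eval ((t - 1)/t)) 0 with hqx | hqx
      · rw [hqx]; simp
      · exact myFieldId h n k hkn t _ _ _ _ ht0 hqx hx0
    have hcont : ContinuousAt g 1 := by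
      have hc1 : ContinuousAt (fun t : ℂ => (t - 1)/t) 1 :=
        ContinuousAt.div (continuousAt_id.sub continuousAt_const) continuousAt_id one_ne_zero
      have hc2 : ContinuousAt (fun t : ℂ => (t ^ (h+1) - 1)/t ^ (h+1)) 1 :=
        ContinuousAt.div ((continuous_pow (h+1)).continuousAt.sub continuousAt_const)
          (continuous_pow (h+1)).continuousAt (by norm_num)
      have hq1 : q.eval (((1:ℂ) - 1)/1) ≠ 0 := by simpa using hq0
      exact (((continuous_pow (h * (n - k))).continuousAt).mul
          (((continuous_finset_sum (Finset.range (h+1)) fun j _ => continuous_pow j).pow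
            k).continuousAt)).mul
        ((((q.continuous).continuousAt.comp hc2).div
          ((q.continuous).continuousAt.comp hc1) hq1))
    have hg1 : g 1 = ((h:ℂ) + 1) ^ k := by
      simp only [hgdef]
      norm_num
      rw [div_self hq0]
      push_cast
      ring
    exact Filter.Tendsto.congr' heq.symm (hg1 ▸ hcont.continuousWithinAt.tendsto)
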